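/- Let μ be an infinite cardinal and X a Hausdorff (T2) μ-sequential topological space. Then the tightness of X is at most μ: for every A ⊆ X and every x in the closure of A there is B ⊆ A with #B ≤ μ such that x is in the closure of B. -/

import Mathlib

open Cardinal Set Filter Topology

/-- A space is `μ`-sequential if for every non-closed set `A` there are a limit ordinal
`η` of cardinality at most `μ`, a transfinite family of points of `A` indexed by the
ordinals below `η`, and a point `p ∉ A` to which this family converges, i.e. every
neighborhood of `p` contains a final segment of the family. -/
def MuSequential (μ : Cardinal.{u}) (X : Type u) [TopologicalSpace X] : Prop :=
  ∀ A : Set X, ¬ IsClosed A →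
    ∃ (η : Ordinal.{u}), Order.IsSuccLimit η ∧ η.card ≤ μ ∧
      ∃ (x : Set.Iio η → X) (p : X), p ∉ A ∧ (∀ α, x α ∈ A) ∧
        ∀ U ∈ 𝓝 p, ∃ β : Set.Iio η, ∀ α : Set.Iio η,
          (β : Ordinal) ≤ (α : Ordinal) → x α ∈ U

theorem muSequential_tightness_le
    {X : Type u} [TopologicalSpace X] [T2Space X] (μ : Cardinal.{u})
    (hμ : ℵ₀ ≤ μ) (hseq : MuSequential μ X) :
    ∀ A : Set X, ∀ x ∈ closure A, ∃ B ⊆ A, #B ≤ μ ∧ x ∈ closure B := by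
  intro A x hx
  set A' : Set X := {y | ∃ B ⊆ A, #B ≤ μ ∧ y ∈ closure B} with hA'def
  have hAA' : A ⊆ A' := by
    intro a ha
    exact ⟨{a}, singleton_subset_iff.2 ha, by
      simpa using (Cardinal.one_le_aleph0.trans hμ), subset_closure rfl⟩
  have hclosed : IsClosed A' := by
    by_contra hnc
    obtain ⟨η, hηlim, hηcard, y, p, hpA', hyA', hconv⟩ := hseq A' hnc
    -- choose for each α a witness B α
    choose B hBA hBcard hyB using hyA'
    refine hpA' ⟨⋃ α, B α, iUnion_subset hBA, ?_, ?_⟩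
    · have h1 : lift.{u+1} #(⋃ α, B α) ≤ lift.{u} #(Set.Iio η) * ⨆ α, lift.{u+1} #(B α) :=
        mk_iUnion_le_lift B
      have h2 : lift.{u} #(Set.Iio η) ≤ lift.{u+1} μ := by
        rw [Ordinal.mk_Iio_ordinal, Cardinal.lift_lift]
        exact Cardinal.lift_le.2 hηcard
      have h3 : (⨆ α, lift.{u+1} #(B α)) ≤ lift.{u+1} μ :=
        ciSup_le' fun α => Cardinal.lift_le.2 (hBcard α)
      have h4 : lift.{u+1} #(⋃ α, B α) ≤ lift.{u+1} μ := by
        calc lift.{u+1} #(⋃ α, B α) ≤ lift.{u} #(Set.Iio η) * ⨆ α, lift.{u+1} #(B α) := h1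
          _ ≤ lift.{u+1} μ * lift.{u+1} μ := mul_le_mul' h2 h3
          _ = lift.{u+1} μ := by
              rw [← Cardinal.lift_mul, Cardinal.mul_eq_self hμ]
      exact Cardinal.lift_le.1 h4
    · rw [mem_closure_iff]
      intro o ho hpo
      obtain ⟨β, hβ⟩ := hconv o (ho.mem_nhds hpo)
      have hyβ : y β ∈ o := hβ β le_rfl
      have := (mem_closure_iff.1 (hyB β)) o ho hyβ
      obtain ⟨z, hzo, hz⟩ := this
      exact ⟨z, hzo, mem_iUnion.2 ⟨β, hz⟩⟩
  have : closure A ⊆ A' := closure_minimal hAA' hclosed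
  exact this hx
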